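/- Let δ, γ be nonzero ordinals, τ an ordinal, and Σ = ⟨S_β : β < τ⟩ a partition of δ*. Every member of I^{Σ,γ} can be written as a union of a finite family of pairwise disjoint basic sets, and this family of pairwise disjoint basic sets is unique: if E and E' are finite sets of pairwise disjoint basic sets with ⋃E = ⋃E', then E = E'. -/

import Mathlib

open Ordinal Cardinal

abbrev SOrd : Type 1 := Ordinalᵒᵈ ⊕ₗ Ordinal

namespace SOrd
def neg (α : Ordinal) : SOrd := toLex (Sum.inl (OrderDual.toDual α))
def pos (α : Ordinal) : SOrd := toLex (Sum.inr α)
def IsPos (a : SOrd) : Prop := ∃ α : Ordinal, a = pos α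
def val (a : SOrd) : Ordinal := Sum.elim (fun b => OrderDual.ofDual b) id (ofLex a)
end SOrd

def IsBetween (δ : Ordinal) (a : SOrd) : Prop := SOrd.neg δ < a ∧ a < SOrd.pos δ

def Lset (δ γ : Ordinal) : Set (List SOrd) :=
  {x | x ≠ [] ∧ (∃ h : 0 < x.length, ∃ α < γ, x[0]'h = SOrd.pos α) ∧
    ∀ k, ∀ h : k < x.length, 0 < k → IsBetween δ (x[k]'h)}

def Llt (x y : List SOrd) : Prop :=
  (∃ k, ∃ hx : k < x.length, ∃ hy : k < y.length,
      x.take k = y.take k ∧ x[k]'hx < y[k]'hy) ∨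
  (∃ hy : x.length < y.length, y.take x.length = x ∧ SOrd.IsPos (y[x.length]'hy)) ∨
  (∃ hx : y.length < x.length, x.take y.length = y ∧ ¬ SOrd.IsPos (x[y.length]'hx))

/-- `S` (as the indexed family `⟨S β : β < τ⟩`, where each `ξ ∈ S β` codes the
negative ordinal `ξ*`) is a partition of `δ*`. -/
def IsPartition (δ τ : Ordinal) (S : Ordinal → Set Ordinal) : Prop :=
  (∀ β, S β ⊆ Set.Iio δ) ∧ (∀ β, τ ≤ β → S β = ∅) ∧ (∀ ξ, ξ < δ → ∃! β, ξ ∈ S β)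

/-- `β^Σ(ξ*)`: the index of the piece of the partition containing `ξ*`. -/
noncomputable def colorOf (S : Ordinal → Set Ordinal) (ξ : Ordinal) : Ordinal :=
  sInf {β | ξ ∈ S β}

/-- The index set `r_x`. -/
def rIdx (τ : Ordinal) (x : List SOrd) : Set ℕ :=
  {i | ∃ h : i < x.length, 2 ≤ i ∧ i % 2 = 0 ∧ x[i]'h < SOrd.pos τ}

/-- `Σ`-relevant sequences. -/
def Relevant (δ γ τ : Ordinal) (S : Ordinal → Set Ordinal) (x : List SOrd) : Prop :=
  x ∈ Lset δ γ ∧ 3 ≤ x.length ∧ x.length % 2 = 1 ∧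
  (∀ i, ∀ h : i < x.length, (SOrd.IsPos (x[i]'h) ↔ i % 2 = 0)) ∧
  (∀ i ∈ rIdx τ x, ∀ j ∈ rIdx τ x, i < j →
    ∀ (hi : i - 1 < x.length) (hj : j - 1 < x.length),
      colorOf S (x[j-1]'hj).val < colorOf S (x[i-1]'hi).val) ∧
  x.length - 1 ∈ rIdx τ x

/-- `J^{Σ,γ}_x = {z ∈ L^{δ,γ} : x↾(|x|-1) ≤ z < x}`. -/
def Jset (δ γ : Ordinal) (x : List SOrd) : Set (List SOrd) :=
  {z ∈ Lset δ γ | (z = x.take (x.length - 1) ∨ Llt (x.take (x.length - 1)) z) ∧ Llt z x}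

/-- The initial segment `L^{δ,γ}_α = {z : z < ⟨α⟩}` (equal to `L^{δ,γ}` when `α = γ`). -/
def Lbelow (δ γ α : Ordinal) : Set (List SOrd) :=
  {z ∈ Lset δ γ | Llt z [SOrd.pos α]}

/-- `L^{δ,γ}_x = {z ∈ L^{δ,γ} : z < x}`. -/
def Lx (δ γ : Ordinal) (x : List SOrd) : Set (List SOrd) :=
  {z ∈ Lset δ γ | Llt z x}

/-- The basic sets of `I^{Σ,γ}`. -/
def IsBasic (δ γ τ : Ordinal) (S : Ordinal → Set Ordinal) (B : Set (List SOrd)) : Prop :=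
  (∃ α ≤ γ, B = Lbelow δ γ α) ∨
  (∃ x, Relevant δ γ τ S x ∧ B = Jset δ γ x) ∨
  (∃ z ∈ Lset δ γ, B = ({z} : Set (List SOrd)))

/-- `I^{Σ,γ}`: finite unions of basic sets. -/
def Ifam (δ γ τ : Ordinal) (S : Ordinal → Set Ordinal) : Set (Set (List SOrd)) :=
  {A | ∃ E : Finset (Set (List SOrd)), (∀ B ∈ E, IsBasic δ γ τ S B) ∧
    A = ⋃ B ∈ E, (B : Set (List SOrd))}

/-- `I^{Σ,γ}_x = {A ⊆ L^{δ,γ}_x : A ∈ I^{Σ,γ}}`. -/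
def Ix (δ γ τ : Ordinal) (S : Ordinal → Set Ordinal) (x : List SOrd) : Set (Set (List SOrd)) :=
  {A | A ⊆ Lx δ γ x ∧ A ∈ Ifam δ γ τ S}


namespace SOrd
theorem pos_lt_pos_iff {α β : Ordinal} : pos α < pos β ↔ α < β := Sum.Lex.inr_lt_inr_iff
theorem neg_lt_neg_iff {α β : Ordinal} : neg α < neg β ↔ β < α := by
  rw [neg, neg, Sum.Lex.inl_lt_inl_iff]; exact Iff.rfl
theorem neg_lt_pos (α β : Ordinal) : neg α < pos β := Sum.Lex.inl_lt_inr _ _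
theorem not_pos_lt_neg (α β : Ordinal) : ¬ pos α < neg β := Sum.Lex.not_inr_lt_inl
theorem pos_ne_neg (α β : Ordinal) : pos α ≠ neg β := by
  intro h; exact (neg_lt_pos β α).ne' (by rw [h])
theorem isPos_pos (α : Ordinal) : IsPos (pos α) := ⟨α, rfl⟩
theorem not_isPos_neg (α : Ordinal) : ¬ IsPos (neg α) := by
  rintro ⟨β, hβ⟩; exact pos_ne_neg β α hβ.symm
theorem pos_or_neg (a : SOrd) : (∃ α, a = pos α) ∨ (∃ α, a = neg α) := by
  rcases h : ofLex a with b | c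
  · right; exact ⟨OrderDual.ofDual b, by simp [neg, ← h]⟩
  · left; exact ⟨c, by simp [pos, ← h]⟩
theorem pos_inj {α β : Ordinal} (h : pos α = pos β) : α = β := by simpa [pos] using h
theorem neg_inj {α β : Ordinal} (h : neg α = neg β) : α = β := by simpa [neg] using h
theorem not_isPos_iff {a : SOrd} : ¬ IsPos a ↔ ∃ α, a = neg α := by
  constructor
  · intro h; rcases pos_or_neg a with ⟨α, rfl⟩ | h'
    · exact absurd (isPos_pos α) h
    · exact h'
  · rintro ⟨α, rfl⟩; exact not_isPos_neg α
theorem lt_pos_of_not_isPos {a : SOrd} (h : ¬ IsPos a) (β : Ordinal) : a < pos β := by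
  rcases not_isPos_iff.1 h with ⟨α, rfl⟩; exact neg_lt_pos α β
theorem lt_trichotomy' (a b : SOrd) : a < b ∨ a = b ∨ b < a := lt_trichotomy a b
end SOrd

/-- comparison of optional entries: `none` is a middle element. -/
def mlt : Option SOrd → Option SOrd → Prop
  | some a, some b => a < b
  | none, some b => SOrd.IsPos b
  | some a, none => ¬ SOrd.IsPos a
  | none, none => False

theorem mlt_irrefl (a : Option SOrd) : ¬ mlt a a := by
  cases a with
  | none => simp [mlt]
  | some a => simp [mlt]

theorem mlt_trans {a b c : Option SOrd} (h1 : mlt a b) (h2 : mlt b c) : mlt a c := by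
  cases a <;> cases b <;> cases c <;> simp only [mlt] at *
  case none.some.none => exact h2 h1
  case none.some.some b c =>
    rcases h1 with ⟨β, rfl⟩
    rcases SOrd.pos_or_neg c with ⟨ζ, rfl⟩ | ⟨ζ, rfl⟩
    · exact SOrd.isPos_pos ζ
    · exact absurd h2 (SOrd.not_pos_lt_neg _ _)
  case some.none.some a c =>
    rcases SOrd.not_isPos_iff.1 h1 with ⟨ξ, rfl⟩
    rcases h2 with ⟨ζ, rfl⟩
    exact SOrd.neg_lt_pos _ _
  case some.some.none a b =>
    rcases SOrd.not_isPos_iff.1 h2 with ⟨ξ, rfl⟩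
    intro hp
    rcases hp with ⟨α, rfl⟩
    exact SOrd.not_pos_lt_neg _ _ h1
  case some.some.some => exact h1.trans h2

theorem mlt_trichotomy (a b : Option SOrd) : mlt a b ∨ a = b ∨ mlt b a := by
  cases a <;> cases b
  · right; left; rfl
  case none.some b =>
    by_cases h : SOrd.IsPos b
    · left; exact h
    · right; right; exact h
  case some.none a =>
    by_cases h : SOrd.IsPos a
    · right; right; exact h
    · left; exact h
  case some.some a b =>
    rcases lt_trichotomy a b with h | h | h
    · left; exact h
    · right; left; rw [h]
    · right; right; exact h

theorem llt_iff {x y : List SOrd} :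
    Llt x y ↔ ∃ k : ℕ, (∀ j : ℕ, j < k → x[j]? = y[j]?) ∧ mlt x[k]? y[k]? := by
  constructor
  · rintro (⟨k, hx, hy, hpre, hlt⟩ | ⟨hy, hpre, hpos⟩ | ⟨hx, hpre, hneg⟩)
    · refine ⟨k, fun j hj => ?_, ?_⟩
      · have := congrArg (fun l => l[j]?) hpre
        simpa [List.getElem?_take, hj] using this
      · rw [List.getElem?_eq_getElem hx, List.getElem?_eq_getElem hy]; exact hlt
    · refine ⟨x.length, fun j hj => ?_, ?_⟩
      · have := congrArg (fun l => l[j]?) hpre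
        simpa [List.getElem?_take, hj] using this.symm
      · rw [List.getElem?_eq_none (le_refl x.length), List.getElem?_eq_getElem hy]
        exact hpos
    · refine ⟨y.length, fun j hj => ?_, ?_⟩
      · have := congrArg (fun l => l[j]?) hpre
        simpa [List.getElem?_take, hj] using this
      · rw [List.getElem?_eq_none (le_refl y.length), List.getElem?_eq_getElem hx]
        exact hneg
  · rintro ⟨k, hpre, hlt⟩
    rcases Nat.lt_or_ge k x.length with hkx | hkx
    · rcases Nat.lt_or_ge k y.length with hky | hky
      · left
        refine ⟨k, hkx, hky, ?_, ?_⟩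
        · apply List.ext_getElem?
          intro j
          rcases Nat.lt_or_ge j k with hj | hj
          · rw [List.getElem?_take, List.getElem?_take] <;> try exact hj
            · exact if_pos hj ▸ (by simp [hj, hpre j hj])
          · rw [List.getElem?_eq_none, List.getElem?_eq_none] <;>
              simp [List.length_take, hj]
        · have := hlt
          rwa [List.getElem?_eq_getElem hkx, List.getElem?_eq_getElem hky] at this
      · -- k ≥ y.length, k < x.length
        have hyk : y.length ≤ k := hky
        -- show k = y.length
        have hk : k = y.length := by
          by_contra hne
          have hlt' : y.length < k := lt_of_le_of_ne hyk (Ne.symm hne)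
          have := hpre y.length hlt'
          rw [List.getElem?_eq_none (le_refl y.length)] at this
          have hx' : x.length ≤ y.length := by
            by_contra h'
            push_neg at h'
            rw [List.getElem?_eq_getElem h'] at this
            exact (Option.some_ne_none _) this
          exact absurd hkx (by omega)
        subst hk
        right; right
        refine ⟨hkx, ?_, ?_⟩
        · apply List.ext_getElem?
          intro j
          rcases Nat.lt_or_ge j y.length with hj | hj
          · rw [List.getElem?_take]
            simp only [hj, if_pos]
            simp [hj, hpre j hj]
          · rw [List.getElem?_eq_none, List.getElem?_eq_none]
            · exact hj
            · simp [List.length_take, hj]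
        · have := hlt
          rw [List.getElem?_eq_getElem hkx, List.getElem?_eq_none (le_refl y.length)] at this
          exact this
    · rcases Nat.lt_or_ge k y.length with hky | hky
      · have hk : k = x.length := by
          by_contra hne
          have hlt' : x.length < k := lt_of_le_of_ne hkx (Ne.symm hne)
          have := hpre x.length hlt'
          rw [List.getElem?_eq_none (le_refl x.length)] at this
          have : y.length ≤ x.length := by
            by_contra h'
            push_neg at h'
            rw [List.getElem?_eq_getElem h'] at this
            exact (Option.some_ne_none _) this.symm
          exact absurd hky (by omega)
        subst hk
        right; left
        refine ⟨hky, ?_, ?_⟩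
        · apply List.ext_getElem?
          intro j
          rcases Nat.lt_or_ge j x.length with hj | hj
          · rw [List.getElem?_take]
            simp only [hj, if_pos]
            simp [hj, (hpre j hj).symm]
          · rw [List.getElem?_eq_none, List.getElem?_eq_none]
            · exact hj
            · simp [List.length_take, hj]
        · have := hlt
          rw [List.getElem?_eq_getElem hky, List.getElem?_eq_none (le_refl x.length)] at this
          exact this
      · exfalso
        rw [List.getElem?_eq_none hkx, List.getElem?_eq_none hky] at hlt
        exact hlt

theorem llt_irrefl (x : List SOrd) : ¬ Llt x x := by
  rw [llt_iff]
  rintro ⟨k, -, hlt⟩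
  exact mlt_irrefl _ hlt

theorem llt_trans {x y z : List SOrd} (h1 : Llt x y) (h2 : Llt y z) : Llt x z := by
  rw [llt_iff] at *
  obtain ⟨k1, hp1, hl1⟩ := h1
  obtain ⟨k2, hp2, hl2⟩ := h2
  rcases Nat.lt_trichotomy k1 k2 with h | h | h
  · exact ⟨k1, fun j hj => (hp1 j hj).trans (hp2 j (hj.trans h)), (hp2 k1 h) ▸ hl1⟩
  · subst h
    exact ⟨k1, fun j hj => (hp1 j hj).trans (hp2 j hj), mlt_trans hl1 hl2⟩
  · exact ⟨k2, fun j hj => (hp1 j (hj.trans h)).trans (hp2 j hj),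
      (hp1 k2 h).symm ▸ hl2⟩

theorem llt_asymm {x y : List SOrd} (h1 : Llt x y) : ¬ Llt y x :=
  fun h2 => llt_irrefl x (llt_trans h1 h2)

theorem llt_trichotomy (x y : List SOrd) : Llt x y ∨ x = y ∨ Llt y x := by
  by_cases hxy : x = y
  · right; left; exact hxy
  · have hne : ∃ k : ℕ, x[k]? ≠ y[k]? := by
      by_contra h
      push_neg at h
      exact hxy (List.ext_getElem? h)
    classical
    let k := Nat.find hne
    have hk : x[k]? ≠ y[k]? := Nat.find_spec hne
    have hmin : ∀ j : ℕ, j < k → x[j]? = y[j]? := fun j hj => by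
      by_contra h
      exact Nat.find_min hne hj h
    rcases mlt_trichotomy x[k]? y[k]? with h | h | h
    · left; exact llt_iff.2 ⟨k, hmin, h⟩
    · exact absurd h hk
    · right; right
      exact llt_iff.2 ⟨k, fun j hj => (hmin j hj).symm, h⟩

/-- non-strict order -/
def Lle (x y : List SOrd) : Prop := Llt x y ∨ x = y

theorem lle_refl (x : List SOrd) : Lle x x := Or.inr rfl
theorem lle_of_llt {x y : List SOrd} (h : Llt x y) : Lle x y := Or.inl h
theorem llt_of_lle_of_llt {x y z : List SOrd} (h1 : Lle x y) (h2 : Llt y z) : Llt x z := by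
  rcases h1 with h1 | rfl
  · exact llt_trans h1 h2
  · exact h2
theorem llt_of_llt_of_lle {x y z : List SOrd} (h1 : Llt x y) (h2 : Lle y z) : Llt x z := by
  rcases h2 with h2 | rfl
  · exact llt_trans h1 h2
  · exact h1
theorem lle_trans {x y z : List SOrd} (h1 : Lle x y) (h2 : Lle y z) : Lle x z := by
  rcases h1 with h1 | rfl
  · exact lle_of_llt (llt_of_llt_of_lle h1 h2)
  · exact h2
theorem lle_antisymm {x y : List SOrd} (h1 : Lle x y) (h2 : Lle y x) : x = y := by
  rcases h1 with h1 | rfl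
  · rcases h2 with h2 | rfl
    · exact absurd h2 (llt_asymm h1)
    · rfl
  · rfl
theorem lle_total (x y : List SOrd) : Lle x y ∨ Lle y x := by
  rcases llt_trichotomy x y with h | h | h
  · exact Or.inl (Or.inl h)
  · exact Or.inl (Or.inr h)
  · exact Or.inr (Or.inl h)
theorem lle_of_not_llt {x y : List SOrd} (h : ¬ Llt y x) : Lle x y := by
  rcases llt_trichotomy x y with h' | h' | h'
  · exact Or.inl h'
  · exact Or.inr h'
  · exact absurd h' h
theorem not_llt_of_lle {x y : List SOrd} (h : Lle x y) : ¬ Llt y x := by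
  rcases h with h | h
  · exact llt_asymm h
  · rw [h]; exact llt_irrefl y

theorem llt_of_diff {x y : List SOrd} (k : ℕ) (h : ∀ j : ℕ, j < k → x[j]? = y[j]?)
    (hm : mlt x[k]? y[k]?) : Llt x y := llt_iff.2 ⟨k, h, hm⟩

theorem take_eq_of_getElem? {z b : List SOrd} (hlen : b.length ≤ z.length)
    (h : ∀ j : ℕ, j < b.length → z[j]? = b[j]?) : z.take b.length = b := by
  apply List.ext_getElem?
  intro j
  rcases Nat.lt_or_ge j b.length with hj | hj
  · rw [List.getElem?_take]
    simp [hj, h j hj]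
  · rw [List.getElem?_eq_none, List.getElem?_eq_none hj]
    simp [List.length_take, hj]

theorem getElem?_of_take_eq {z b : List SOrd} (h : z.take b.length = b) :
    ∀ j : ℕ, j < b.length → z[j]? = b[j]? := by
  intro j hj
  have := congrArg (fun l => l[j]?) h
  simpa [List.getElem?_take, hj] using this

/-- appending a negative element gives a smaller sequence -/
theorem llt_append_neg (z : List SOrd) (ξ : Ordinal) : Llt (z ++ [SOrd.neg ξ]) z := by
  apply llt_of_diff z.length
  · intro j hj
    rw [List.getElem?_append_left hj]
  · rw [List.getElem?_eq_none (le_refl z.length)]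
    rw [List.getElem?_append_right (le_refl z.length)]
    simp [mlt, SOrd.not_isPos_neg]

/-- appending a positive element (and whatever) gives a bigger sequence -/
theorem llt_append_pos (z r : List SOrd) (σ : Ordinal) : Llt z (z ++ SOrd.pos σ :: r) := by
  apply llt_of_diff z.length
  · intro j hj
    rw [List.getElem?_append_left hj]
  · rw [List.getElem?_eq_none (le_refl z.length)]
    rw [List.getElem?_append_right (le_refl z.length)]
    simp [mlt, SOrd.isPos_pos]

theorem llt_single_single {α β : Ordinal} (h : α < β) :
    Llt [SOrd.pos α] [SOrd.pos β] := by
  apply llt_of_diff 0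
  · intro j hj; omega
  · simp [mlt, SOrd.pos_lt_pos_iff, h]

theorem llt_of_head_lt {x y : List SOrd} {a b : SOrd} (hx : x[0]? = some a)
    (hy : y[0]? = some b) (h : a < b) : Llt x y := by
  apply llt_of_diff 0
  · intro j hj; omega
  · rw [hx, hy]; exact h

/-- the key density lemma: if `w < g` then `w < g ++ [0*]` unless `g ++ [0*]` is
an initial segment of `w`. -/
theorem llt_append_neg0_of_llt {w g : List SOrd} (h : Llt w g) :
    Llt w (g ++ [SOrd.neg 0]) ∨ (g.length + 1 ≤ w.length ∧
      ∀ j : ℕ, j < g.length + 1 → w[j]? = (g ++ [SOrd.neg 0])[j]?) := by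
  rw [llt_iff] at h
  obtain ⟨k, hpre, hm⟩ := h
  rcases Nat.lt_trichotomy k g.length with hk | hk | hk
  · left
    apply llt_of_diff k
    · intro j hj
      rw [List.getElem?_append_left (hj.trans hk), hpre j hj]
    · rw [List.getElem?_append_left hk]
      exact hm
  · -- k = g.length
    subst hk
    rw [List.getElem?_eq_none (le_refl g.length)] at hm
    rcases hw : w[g.length]? with _ | a
    · rw [hw] at hm; exact absurd hm (mlt_irrefl none)
    · rw [hw] at hm
      rcases SOrd.not_isPos_iff.1 hm with ⟨ξ, rfl⟩
      rcases eq_or_ne ξ 0 with rfl | hξ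
      · right
        have hwlen : g.length < w.length := by
          by_contra h'
          push_neg at h'
          rw [List.getElem?_eq_none h'] at hw
          exact Option.some_ne_none _ hw.symm
        refine ⟨hwlen, fun j hj => ?_⟩
        rcases Nat.lt_or_ge j g.length with hj' | hj'
        · rw [List.getElem?_append_left hj', hpre j hj']
        · have : j = g.length := by omega
          subst this
          rw [List.getElem?_append_right (le_refl g.length)]
          simpa using hw
      · left
        apply llt_of_diff g.length
        · intro j hj
          rw [List.getElem?_append_left hj, hpre j hj]
        · rw [hw, List.getElem?_append_right (le_refl g.length)]
          simpa [mlt, SOrd.neg_lt_neg_iff] using pos_iff_ne_zero.2 hξ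
  · exfalso
    have h1 := hpre g.length hk
    rw [List.getElem?_eq_none (le_refl g.length)] at h1
    have hwlen : w.length ≤ g.length := by
      by_contra h'
      push_neg at h'
      rw [List.getElem?_eq_getElem h'] at h1
      exact Option.some_ne_none _ h1
    rw [List.getElem?_eq_none (hwlen.trans hk.le), List.getElem?_eq_none] at hm
    · exact hm
    · exact hk.le.trans' (by omega)

theorem llt_of_prefix_pos {w x : List SOrd} {a : SOrd}
    (hpre : ∀ j : ℕ, j < w.length → x[j]? = w[j]?)
    (hx : x[w.length]? = some a) (ha : a.IsPos) : Llt w x := by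
  apply llt_of_diff w.length
  · intro j hj; exact (hpre j hj).symm
  · rw [hx, List.getElem?_eq_none (le_refl w.length)]; exact ha

theorem llt_of_prefix_neg {w x : List SOrd} {a : SOrd}
    (hpre : ∀ j : ℕ, j < w.length → x[j]? = w[j]?)
    (hx : x[w.length]? = some a) (ha : ¬ a.IsPos) : Llt x w := by
  apply llt_of_diff w.length
  · intro j hj; exact hpre j hj
  · rw [hx, List.getElem?_eq_none (le_refl w.length)]; exact ha

/-- if `b < z < y` and `y` properly extends `b`, then `z` properly extends `b`. -/
theorem sandwich {b z y : List SOrd} (h1 : Llt b z) (h2 : Llt z y)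
    (hby : b.length < y.length) (hpre : ∀ j : ℕ, j < b.length → y[j]? = b[j]?) :
    b.length < z.length ∧ ∀ j : ℕ, j < b.length → z[j]? = b[j]? := by
  rw [llt_iff] at h1
  obtain ⟨k, pre, m⟩ := h1
  rcases Nat.lt_trichotomy k b.length with hk | hk | hk
  · exfalso
    apply llt_asymm h2
    apply llt_of_diff k
    · intro j hj
      rw [hpre j (hj.trans hk), pre j hj]
    · rw [hpre k hk]; exact m
  · subst hk
    rw [List.getElem?_eq_none (le_refl b.length)] at m
    rcases hz : z[b.length]? with _ | a
    · rw [hz] at m; exact absurd m (mlt_irrefl none)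
    · have hlen : b.length < z.length := by
        by_contra h'
        push_neg at h'
        rw [List.getElem?_eq_none h'] at hz
        exact Option.some_ne_none _ hz.symm
      exact ⟨hlen, fun j hj => (pre j hj).symm⟩
  · exfalso
    have h1 := pre b.length hk
    rw [List.getElem?_eq_none (le_refl b.length)] at h1
    have hzlen : z.length ≤ b.length := by
      by_contra h'
      push_neg at h'
      rw [List.getElem?_eq_getElem h'] at h1
      exact Option.some_ne_none _ h1.symm
    rw [List.getElem?_eq_none (hzlen.trans hk.le), List.getElem?_eq_none hk.le] at m
    exact m

section LsetLemmas

variable {δ γ : Ordinal}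

theorem Lset.length_pos {x : List SOrd} (hx : x ∈ Lset δ γ) : 0 < x.length :=
  List.length_pos_iff.2 hx.1

theorem Lset.head {x : List SOrd} (hx : x ∈ Lset δ γ) :
    ∃ α, α < γ ∧ x[0]? = some (SOrd.pos α) := by
  obtain ⟨-, ⟨h0, α, hα, hhead⟩, -⟩ := hx
  exact ⟨α, hα, by rw [List.getElem?_eq_getElem h0, hhead]⟩

theorem Lset.between {x : List SOrd} (hx : x ∈ Lset δ γ) {k : ℕ} {a : SOrd}
    (hk : 0 < k) (h : x[k]? = some a) : IsBetween δ a := by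
  obtain ⟨-, -, hbet⟩ := hx
  have hlen : k < x.length := by
    by_contra h'
    push_neg at h'
    rw [List.getElem?_eq_none h'] at h
    exact Option.some_ne_none _ h.symm
  have := hbet k hlen hk
  rwa [(by rw [List.getElem?_eq_getElem hlen] at h; exact Option.some_inj.1 h : x[k]'hlen = a)] at this

theorem Lset.append {x : List SOrd} (hx : x ∈ Lset δ γ) {a : SOrd}
    (ha : IsBetween δ a) : x ++ [a] ∈ Lset δ γ := by
  obtain ⟨hne, ⟨h0, α, hα, hhead⟩, hbet⟩ := hx
  refine ⟨by simp, ⟨by simp only [List.length_append, List.length_cons]; omega, α, hα, ?_⟩, ?_⟩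
  · rw [List.getElem_append_left h0]; exact hhead
  · intro k hk hkpos
    rcases Nat.lt_or_ge k x.length with hk' | hk'
    · rw [List.getElem_append_left hk']
      exact hbet k hk' hkpos
    · have : k = x.length := by simp at hk; omega
      subst this
      rw [List.getElem_append_right (le_refl x.length)]
      simpa using ha

theorem Lset.take {x : List SOrd} (hx : x ∈ Lset δ γ) {m : ℕ} (hm : 0 < m) :
    x.take m ∈ Lset δ γ := by
  obtain ⟨hne, ⟨h0, α, hα, hhead⟩, hbet⟩ := hx
  have hlen : 0 < (x.take m).length := by
    simp [List.length_take]; exact ⟨hm, h0⟩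
  refine ⟨List.length_pos_iff.1 hlen, ⟨hlen, α, hα, ?_⟩, ?_⟩
  · rw [List.getElem_take]; exact hhead
  · intro k hk hkpos
    rw [List.getElem_take]
    exact hbet k (by simp [List.length_take] at hk; omega) hkpos

theorem Lset.single {α : Ordinal} (hα : α < γ) : [SOrd.pos α] ∈ Lset δ γ := by
  refine ⟨by simp, ⟨by simp, α, hα, rfl⟩, ?_⟩
  intro k hk hkpos
  simp at hk; omega

theorem isBetween_neg0 (hδ : δ ≠ 0) : IsBetween δ (SOrd.neg 0) :=
  ⟨SOrd.neg_lt_neg_iff.2 (pos_iff_ne_zero.2 hδ), SOrd.neg_lt_pos _ _⟩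

theorem isBetween_pos0 (hδ : δ ≠ 0) : IsBetween δ (SOrd.pos 0) :=
  ⟨SOrd.neg_lt_pos _ _, SOrd.pos_lt_pos_iff.2 (pos_iff_ne_zero.2 hδ)⟩

end LsetLemmas

section Structural

variable {δ γ τ : Ordinal} {S : Ordinal → Set Ordinal}

theorem mem_Jset_iff {x z : List SOrd} :
    z ∈ Jset δ γ x ↔ z ∈ Lset δ γ ∧ Lle (x.take (x.length - 1)) z ∧ Llt z x := by
  unfold Jset Lle
  constructor
  · rintro ⟨h1, h2, h3⟩
    refine ⟨h1, ?_, h3⟩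
    rcases h2 with h2 | h2
    · exact Or.inr h2.symm
    · exact Or.inl h2
  · rintro ⟨h1, h2, h3⟩
    refine ⟨h1, ?_, h3⟩
    rcases h2 with h2 | h2
    · exact Or.inr h2
    · exact Or.inl h2.symm

theorem mem_Lbelow_iff {z : List SOrd} {α : Ordinal} :
    z ∈ Lbelow δ γ α ↔ z ∈ Lset δ γ ∧ Llt z [SOrd.pos α] := Iff.rfl

namespace Relevant

variable {x : List SOrd}

theorem lset (hx : _root_.Relevant δ γ τ S x) : x ∈ Lset δ γ := hx.1
theorem len3 (hx : _root_.Relevant δ γ τ S x) : 3 ≤ x.length := hx.2.1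
theorem odd (hx : _root_.Relevant δ γ τ S x) : x.length % 2 = 1 := hx.2.2.1

theorem alt' (hx : _root_.Relevant δ γ τ S x) {i : ℕ} {a : SOrd} (h : x[i]? = some a) : SOrd.IsPos a ↔ i % 2 = 0 := by
  have hi : i < x.length := by
    by_contra h'
    push_neg at h'
    rw [List.getElem?_eq_none h'] at h
    exact Option.some_ne_none _ h.symm
  have := hx.2.2.2.1 i hi
  rw [List.getElem?_eq_getElem hi] at h
  rwa [Option.some_inj.1 h] at this

theorem last_pos (hx : _root_.Relevant δ γ τ S x) : ∃ σ : Ordinal, x[x.length - 1]? = some (SOrd.pos σ) := by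
  have hlen : x.length - 1 < x.length := by have := hx.len3; omega
  have h : x[x.length - 1]? = some (x[x.length - 1]'hlen) := List.getElem?_eq_getElem hlen
  have hp : SOrd.IsPos (x[x.length - 1]'hlen) := (hx.alt' h).2 (by have := hx.odd; omega)
  obtain ⟨σ, hσ⟩ := hp
  exact ⟨σ, by rw [h, hσ]⟩

theorem snd_neg (hx : _root_.Relevant δ γ τ S x) : ∃ ξ : Ordinal, x[1]? = some (SOrd.neg ξ) := by
  have hlen : (1:ℕ) < x.length := by have := hx.len3; omega
  have h : x[1]? = some (x[1]'hlen) := List.getElem?_eq_getElem hlen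
  have hnp : ¬ SOrd.IsPos (x[1]'hlen) := by
    rw [hx.alt' h]; omega
  obtain ⟨ξ, hξ⟩ := SOrd.not_isPos_iff.1 hnp
  exact ⟨ξ, by rw [h, hξ]⟩

theorem take_length (hx : _root_.Relevant δ γ τ S x) :
    (x.take (x.length - 1)).length = x.length - 1 := by
  simp [List.length_take]

theorem take_getElem? {j : ℕ} (hj : j < x.length - 1) :
    (x.take (x.length - 1))[j]? = x[j]? := by
  rw [List.getElem?_take]
  simp [hj]

theorem take_lset (hx : _root_.Relevant δ γ τ S x) : x.take (x.length - 1) ∈ Lset δ γ :=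
  Lset.take hx.lset (by have := hx.len3; omega)

theorem take_llt (hx : _root_.Relevant δ γ τ S x) : Llt (x.take (x.length - 1)) x := by
  obtain ⟨σ, hσ⟩ := hx.last_pos
  apply llt_of_prefix_pos (a := SOrd.pos σ)
  · intro j hj
    rw [hx.take_length] at hj
    exact (take_getElem? hj).symm
  · rw [hx.take_length]; exact hσ
  · exact SOrd.isPos_pos σ

theorem take_mem_Jset (hx : _root_.Relevant δ γ τ S x) : x.take (x.length - 1) ∈ Jset δ γ x :=
  mem_Jset_iff.2 ⟨hx.take_lset, lle_refl _, hx.take_llt⟩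

end Relevant

end Structural


section MoreComparisons

variable {δ γ τ : Ordinal} {S : Ordinal → Set Ordinal}

theorem llt_single_single_iff {α β : Ordinal} :
    Llt [SOrd.pos β] [SOrd.pos α] ↔ β < α := by
  constructor
  · intro h
    rw [llt_iff] at h
    obtain ⟨k, pre, m⟩ := h
    rcases Nat.eq_zero_or_pos k with rfl | hk
    · simpa [mlt, SOrd.pos_lt_pos_iff] using m
    · have := pre 0 hk
      simp only [List.getElem?_cons_zero, Option.some_inj] at this
      have h1 : ([SOrd.pos β] : List SOrd)[k]? = none :=
        List.getElem?_eq_none (by simp; omega)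
      have h2 : ([SOrd.pos α] : List SOrd)[k]? = none :=
        List.getElem?_eq_none (by simp; omega)
      rw [h1, h2] at m
      exact absurd m (mlt_irrefl none)
  · exact llt_single_single

/-- `z < ⟨α⟩` when `z(0) < α`, or `z(0) = α` and `z(1)` is negative. -/
theorem llt_single_of {z : List SOrd} {α₀ α : Ordinal}
    (hz0 : z[0]? = some (SOrd.pos α₀))
    (hcase : α₀ < α ∨ (α₀ = α ∧ ∃ ξ, z[1]? = some (SOrd.neg ξ))) :
    Llt z [SOrd.pos α] := by
  rcases hcase with h | ⟨rfl, ξ, hz1⟩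
  · exact llt_of_head_lt hz0 rfl (SOrd.pos_lt_pos_iff.2 h)
  · apply llt_of_prefix_neg (w := [SOrd.pos α₀]) (a := SOrd.neg ξ)
    · intro j hj
      have : j = 0 := by simpa using hj
      subst this
      exact hz0
    · exact hz1
    · exact SOrd.not_isPos_neg ξ

theorem pair_mem_Lset (hδ : δ ≠ 0) (hγ : γ ≠ 0) :
    [SOrd.pos 0, SOrd.neg 0] ∈ Lset δ γ := by
  have : [SOrd.pos 0] ++ [SOrd.neg 0] ∈ Lset δ γ :=
    Lset.append (Lset.single (pos_iff_ne_zero.2 hγ)) (isBetween_neg0 hδ)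
  simpa using this

theorem pair_llt_single (α : Ordinal) : Llt [SOrd.pos 0, SOrd.neg 0] [SOrd.pos α] := by
  apply llt_single_of (α₀ := 0) rfl
  rcases eq_or_ne α 0 with rfl | h
  · exact Or.inr ⟨rfl, 0, rfl⟩
  · exact Or.inl (pos_iff_ne_zero.2 h)

theorem Lbelow_nonempty (hδ : δ ≠ 0) (hγ : γ ≠ 0) (α : Ordinal) :
    (Lbelow δ γ α).Nonempty :=
  ⟨[SOrd.pos 0, SOrd.neg 0], pair_mem_Lset hδ hγ, pair_llt_single α⟩

theorem Lbelow_append_neg0 (hδ : δ ≠ 0) {g : List SOrd} {α : Ordinal}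
    (hg : g ∈ Lbelow δ γ α) : g ++ [SOrd.neg 0] ∈ Lbelow δ γ α :=
  ⟨Lset.append hg.1 (isBetween_neg0 hδ), llt_trans (llt_append_neg g 0) hg.2⟩

theorem single_mem_Lbelow_iff {α β : Ordinal} :
    [SOrd.pos β] ∈ Lbelow δ γ α ↔ β < α ∧ β < γ := by
  constructor
  · rintro ⟨h1, h2⟩
    obtain ⟨β', hβ', hh⟩ := Lset.head h1
    simp only [List.getElem?_cons_zero, Option.some_inj] at hh
    rw [SOrd.pos_inj hh.symm] at hβ'
    exact ⟨llt_single_single_iff.1 h2, hβ'⟩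
  · rintro ⟨h1, h2⟩
    exact ⟨Lset.single h2, llt_single_single h1⟩

theorem Lbelow_mono {α β : Ordinal} (h : α ≤ β) : Lbelow δ γ α ⊆ Lbelow δ γ β := by
  rintro z ⟨h1, h2⟩
  rcases eq_or_lt_of_le h with rfl | h
  · exact ⟨h1, h2⟩
  · exact ⟨h1, llt_trans h2 (llt_single_single h)⟩

theorem Lbelow_ssubset_lt {α β : Ordinal} (hα : α ≤ γ) (hβ : β ≤ γ)
    (h : Lbelow δ γ β ⊂ Lbelow δ γ α) : β < α := by
  by_contra h'
  push_neg at h'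
  exact h.not_subset (Lbelow_mono h')

theorem Lbelow_inj {α β : Ordinal} (hα : α ≤ γ) (hβ : β ≤ γ)
    (h : Lbelow δ γ β = Lbelow δ γ α) : β = α := by
  by_contra hne
  rcases lt_or_gt_of_ne hne with hlt | hlt
  · have : [SOrd.pos β] ∈ Lbelow δ γ α := single_mem_Lbelow_iff.2 ⟨hlt, lt_of_lt_of_le hlt hα⟩
    rw [← h] at this
    exact absurd (single_mem_Lbelow_iff.1 this).1 (lt_irrefl β)
  · have : [SOrd.pos α] ∈ Lbelow δ γ β := single_mem_Lbelow_iff.2 ⟨hlt, lt_of_lt_of_le hlt hβ⟩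
    rw [h] at this
    exact absurd (single_mem_Lbelow_iff.1 this).1 (lt_irrefl α)

end MoreComparisons


section JsetLemmas

variable {δ γ τ : Ordinal} {S : Ordinal → Set Ordinal} {x y : List SOrd}

theorem Relevant.head (hx : Relevant δ γ τ S x) :
    ∃ α₀, α₀ < γ ∧ x[0]? = some (SOrd.pos α₀) := Lset.head hx.lset

theorem Relevant.take_getElem?' (hx : Relevant δ γ τ S x) {j : ℕ} (hj : j < x.length - 1) :
    (x.take (x.length - 1))[j]? = x[j]? := Relevant.take_getElem? hj

/-- The second element of `J_x`. -/
theorem Jset_nontrivial (hδ : δ ≠ 0) (hx : Relevant δ γ τ S x) :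
    ∃ w ∈ Jset δ γ x, w ≠ x.take (x.length - 1) := by
  set ta := x.take (x.length - 1) with hta
  have hlen : ta.length = x.length - 1 := hx.take_length
  have hn3 := hx.len3
  set w := ta ++ [SOrd.pos 0, SOrd.neg 0] with hw
  have hwl : w = (ta ++ [SOrd.pos 0]) ++ [SOrd.neg 0] := by simp [hw]
  have hwset : w ∈ Lset δ γ := by
    rw [hwl]
    exact Lset.append (Lset.append hx.take_lset (isBetween_pos0 hδ)) (isBetween_neg0 hδ)
  have haw : Llt ta w := llt_append_pos ta [SOrd.neg 0] 0
  -- getElem? facts about w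
  have hwj : ∀ j : ℕ, j < x.length - 1 → w[j]? = x[j]? := fun j hj => by
    rw [hw, List.getElem?_append_left (by omega), hta, Relevant.take_getElem? hj]
  have hwn1 : w[x.length - 1]? = some (SOrd.pos 0) := by
    rw [hw, List.getElem?_append_right (by omega)]
    simp [hlen]
  have hwn : w[x.length]? = some (SOrd.neg 0) := by
    rw [hw, List.getElem?_append_right (by omega)]
    have : x.length - ta.length = 1 := by omega
    rw [this]
    rfl
  obtain ⟨σ, hσ⟩ := hx.last_pos
  have hwx : Llt w x := by
    rcases eq_or_ne σ 0 with rfl | hσ0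
    · apply llt_of_prefix_neg (w := x) (a := SOrd.neg 0)
      · intro j hj
        rcases Nat.lt_or_ge j (x.length - 1) with hj' | hj'
        · exact hwj j hj'
        · have : j = x.length - 1 := by omega
          subst this
          rw [hwn1, hσ]
      · exact hwn
      · exact SOrd.not_isPos_neg 0
    · apply llt_of_diff (x.length - 1) hwj
      rw [hwn1, hσ]
      exact SOrd.pos_lt_pos_iff.2 (pos_iff_ne_zero.2 hσ0)
  refine ⟨w, mem_Jset_iff.2 ⟨hwset, lle_of_llt haw, hwx⟩, ?_⟩
  intro h
  rw [h] at haw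
  exact llt_irrefl _ haw

theorem relevant_llt_single (hx : Relevant δ γ τ S x) {α₀ α : Ordinal}
    (hx0 : x[0]? = some (SOrd.pos α₀)) (h : α₀ ≤ α) : Llt x [SOrd.pos α] := by
  apply llt_single_of hx0
  rcases eq_or_lt_of_le h with rfl | h
  · exact Or.inr ⟨rfl, hx.snd_neg⟩
  · exact Or.inl h

theorem single_not_mem_Jset (hx : Relevant δ γ τ S x) (β : Ordinal) :
    [SOrd.pos β] ∉ Jset δ γ x := by
  intro hmem
  obtain ⟨hL, hge, hlt⟩ := mem_Jset_iff.1 hmem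
  obtain ⟨α₀, hα₀, hx0⟩ := hx.head
  have ha0 : (x.take (x.length - 1))[0]? = some (SOrd.pos α₀) := by
    rw [Relevant.take_getElem? (by have := hx.len3; omega)]
    exact hx0
  rcases lt_trichotomy β α₀ with h | h | h
  · exact not_llt_of_lle hge
      (llt_of_head_lt rfl ha0 (SOrd.pos_lt_pos_iff.2 h))
  · exact llt_asymm hlt (relevant_llt_single hx hx0 (le_of_eq h.symm))
  · exact llt_asymm hlt (relevant_llt_single hx hx0 h.le)

theorem Jset_subset_Lbelow (hx : Relevant δ γ τ S x) {α₀ α : Ordinal}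
    (hx0 : x[0]? = some (SOrd.pos α₀)) (h : α₀ ≤ α) :
    Jset δ γ x ⊆ Lbelow δ γ α := by
  intro z hz
  obtain ⟨hL, -, hlt⟩ := mem_Jset_iff.1 hz
  exact ⟨hL, llt_trans hlt (relevant_llt_single hx hx0 h)⟩

theorem Jset_disjoint_Lbelow (hx : Relevant δ γ τ S x) {α₀ α : Ordinal}
    (hx0 : x[0]? = some (SOrd.pos α₀)) (h : α < α₀) :
    Disjoint (Jset δ γ x) (Lbelow δ γ α) := by
  rw [Set.disjoint_left]
  intro z hz hz'
  obtain ⟨hL, hge, -⟩ := mem_Jset_iff.1 hz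
  have ha0 : (x.take (x.length - 1))[0]? = some (SOrd.pos α₀) := by
    rw [Relevant.take_getElem? (by have := hx.len3; omega)]
    exact hx0
  have h1 : Llt [SOrd.pos α] (x.take (x.length - 1)) :=
    llt_of_head_lt rfl ha0 (SOrd.pos_lt_pos_iff.2 h)
  exact llt_asymm (llt_of_llt_of_lle h1 hge) hz'.2

theorem Lbelow_not_subset_Jset (hδ : δ ≠ 0) (hγ : γ ≠ 0) (hx : Relevant δ γ τ S x)
    (α : Ordinal) : ¬ Lbelow δ γ α ⊆ Jset δ γ x := by
  intro hsub
  obtain ⟨α₀, hα₀, hx0⟩ := hx.head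
  have hn3 := hx.len3
  have hlen : (x.take (x.length - 1)).length = x.length - 1 := hx.take_length
  have ha0 : (x.take (x.length - 1))[0]? = some (SOrd.pos α₀) := by
    rw [Relevant.take_getElem? (by omega)]; exact hx0
  -- construct z ∈ Lbelow δ γ α with z < x.take (x.length - 1)
  suffices hsuff : ∃ z, z ∈ Lbelow δ γ α ∧ Llt z (x.take (x.length - 1)) by
    obtain ⟨z, hz1, hz2⟩ := hsuff
    obtain ⟨-, hge, -⟩ := mem_Jset_iff.1 (hsub hz1)
    exact not_llt_of_lle hge hz2
  rcases eq_or_ne α₀ 0 with rfl | hα₀0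
  · -- head of x is 0
    obtain ⟨ξ, hξ⟩ := hx.snd_neg
    have ha1 : (x.take (x.length - 1))[1]? = some (SOrd.neg ξ) := by
      rw [Relevant.take_getElem? (by omega)]; exact hξ
    have hbet : IsBetween δ (SOrd.neg ξ) := Lset.between hx.lset (by omega) hξ
    refine ⟨[SOrd.pos 0, SOrd.neg ξ, SOrd.neg 0], ⟨?_, ?_⟩, ?_⟩
    · have : (([SOrd.pos 0] ++ [SOrd.neg ξ]) ++ [SOrd.neg 0]) ∈ Lset δ γ :=
        Lset.append (Lset.append (Lset.single (pos_iff_ne_zero.2 hγ)) hbet)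
          (isBetween_neg0 hδ)
      simpa using this
    · apply llt_single_of (α₀ := 0) rfl
      rcases eq_or_ne α 0 with rfl | h
      · exact Or.inr ⟨rfl, ξ, rfl⟩
      · exact Or.inl (pos_iff_ne_zero.2 h)
    · -- compare with the take
      rcases Nat.lt_or_ge 2 (x.length - 1) with h2 | h2
      · -- take has an element at index 2, which is positive
        have hx2 : ∃ c, x[2]? = some c ∧ SOrd.IsPos c := by
          have h2x : (2:ℕ) < x.length := by omega
          refine ⟨x[2]'h2x, List.getElem?_eq_getElem h2x, ?_⟩
          exact (hx.alt' (List.getElem?_eq_getElem h2x)).2 (by omega)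
        obtain ⟨c, hc, hcpos⟩ := hx2
        obtain ⟨ζ, rfl⟩ := hcpos
        apply llt_of_diff 2
        · intro j hj
          rw [Relevant.take_getElem? (by omega)]
          interval_cases j
          · rw [hx0]; rfl
          · rw [hξ]; rfl
        · rw [Relevant.take_getElem? h2, hc]
          exact SOrd.neg_lt_pos 0 ζ
      · -- x.length - 1 = 2
        have h2' : x.length - 1 = 2 := by omega
        apply llt_of_prefix_neg (w := x.take (x.length - 1)) (a := SOrd.neg 0)
        · intro j hj
          rw [hlen, h2'] at hj
          rw [Relevant.take_getElem? (by omega)]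
          interval_cases j
          · rw [hx0]; rfl
          · rw [hξ]; rfl
        · rw [hlen, h2']; rfl
        · exact SOrd.not_isPos_neg 0
  · refine ⟨[SOrd.pos 0, SOrd.neg 0], ⟨pair_mem_Lset hδ hγ, pair_llt_single α⟩, ?_⟩
    exact llt_of_head_lt rfl ha0 (SOrd.pos_lt_pos_iff.2 (pos_iff_ne_zero.2 hα₀0))

end JsetLemmas


section Laminar

variable {δ γ τ : Ordinal} {S : Ordinal → Set Ordinal} {x y : List SOrd}

theorem Jset_laminar_aux (hx : Relevant δ γ τ S x) (hy : Relevant δ γ τ S y)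
    (hab : Lle (x.take (x.length - 1)) (y.take (y.length - 1))) :
    Jset δ γ x ⊆ Jset δ γ y ∨ Jset δ γ y ⊆ Jset δ γ x ∨
      Disjoint (Jset δ γ x) (Jset δ γ y) := by
  set ta := x.take (x.length - 1) with hta
  set tb := y.take (y.length - 1) with htb
  have hlena : ta.length = x.length - 1 := hx.take_length
  have hlenb : tb.length = y.length - 1 := hy.take_length
  rcases hab with hlt | heq
  · -- ta < tb
    rcases lle_total x tb with hxb | hbx
    · -- x ≤ tb : disjoint
      right; right
      rw [Set.disjoint_left]
      intro z hz1 hz2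
      obtain ⟨-, -, hzx⟩ := mem_Jset_iff.1 hz1
      obtain ⟨-, hbz, -⟩ := mem_Jset_iff.1 hz2
      exact not_llt_of_lle hbz (llt_of_llt_of_lle hzx hxb)
    · rcases hbx with hbx' | heq2
      · -- tb < x
        rcases lle_total y x with hyx | hxy
        · -- y ≤ x : J_y ⊆ J_x
          right; left
          intro z hz
          obtain ⟨hzL, hbz, hzy⟩ := mem_Jset_iff.1 hz
          exact mem_Jset_iff.2 ⟨hzL, lle_trans (lle_of_llt hlt) hbz,
            llt_of_llt_of_lle hzy hyx⟩
        · -- x ≤ y : derive a contradiction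
          exfalso
          rcases hxy with hxy' | rfl
          · have hpre : ∀ j : ℕ, j < tb.length → y[j]? = tb[j]? := by
              intro j hj
              rw [hlenb] at hj
              rw [htb, Relevant.take_getElem? hj]
            have hby : tb.length < y.length := by
              rw [hlenb]; have := hy.len3; omega
            obtain ⟨hxlen, hxpre⟩ := sandwich hbx' hxy' hby hpre
            rcases Nat.lt_or_ge tb.length (x.length - 1) with hcase | hcase
            · -- tb.length < x.length - 1 : then tb < ta, contradiction
              have hm1 : tb.length < x.length := by omega
              have hc : x[tb.length]? = some (x[tb.length]'hm1) :=
                List.getElem?_eq_getElem hm1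
              have hcpos : SOrd.IsPos (x[tb.length]'hm1) := by
                refine (hx.alt' hc).2 ?_
                rw [hlenb]
                have h1 := hy.odd
                have h2 := hy.len3
                omega
              have : Llt tb ta := by
                apply llt_of_prefix_pos (a := x[tb.length]'hm1)
                · intro j hj
                  rw [hta, Relevant.take_getElem? (by omega), hxpre j hj]
                · rw [hta, Relevant.take_getElem? hcase]
                  exact hc
                · exact hcpos
              exact llt_asymm hlt this
            · -- tb.length = x.length - 1 : then ta = tb, contradiction
              have hle : tb.length ≤ x.length := by omega
              have heq3 : x.take tb.length = tb := take_eq_of_getElem? hle hxpre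
              have : ta = tb := by
                rw [hta, (by omega : x.length - 1 = tb.length), heq3]
              rw [this] at hlt
              exact llt_irrefl _ hlt
          · -- x = y : then ta = tb, contradiction
            exact llt_irrefl ta hlt
      · -- tb = x : disjoint
        right; right
        rw [Set.disjoint_left]
        intro z hz1 hz2
        obtain ⟨-, -, hzx⟩ := mem_Jset_iff.1 hz1
        obtain ⟨-, hbz, -⟩ := mem_Jset_iff.1 hz2
        exact not_llt_of_lle (by rw [← heq2]; exact hbz) hzx
  · -- ta = tb
    rcases lle_total x y with hxy | hyx
    · left
      intro z hz
      obtain ⟨hzL, haz, hzx⟩ := mem_Jset_iff.1 hz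
      exact mem_Jset_iff.2 ⟨hzL, lle_trans (Or.inr heq.symm) haz, llt_of_llt_of_lle hzx hxy⟩
    · right; left
      intro z hz
      obtain ⟨hzL, hbz, hzy⟩ := mem_Jset_iff.1 hz
      exact mem_Jset_iff.2 ⟨hzL, lle_trans (Or.inr heq) hbz, llt_of_llt_of_lle hzy hyx⟩

theorem Jset_laminar (hx : Relevant δ γ τ S x) (hy : Relevant δ γ τ S y) :
    Jset δ γ x ⊆ Jset δ γ y ∨ Jset δ γ y ⊆ Jset δ γ x ∨
      Disjoint (Jset δ γ x) (Jset δ γ y) := by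
  rcases lle_total (x.take (x.length - 1)) (y.take (y.length - 1)) with h | h
  · exact Jset_laminar_aux hx hy h
  · rcases Jset_laminar_aux hy hx h with h' | h' | h'
    · exact Or.inr (Or.inl h')
    · exact Or.inl h'
    · exact Or.inr (Or.inr h'.symm)

end Laminar


section BasicSets

variable {δ γ τ : Ordinal} {S : Ordinal → Set Ordinal}

theorem IsBasic.nonempty (hδ : δ ≠ 0) (hγ : γ ≠ 0) {B : Set (List SOrd)}
    (hB : IsBasic δ γ τ S B) : B.Nonempty := by
  rcases hB with ⟨α, hα, rfl⟩ | ⟨x, hx, rfl⟩ | ⟨z, hz, rfl⟩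
  · exact Lbelow_nonempty hδ hγ α
  · exact ⟨_, hx.take_mem_Jset⟩
  · exact ⟨z, rfl⟩

theorem basic_laminar (hδ : δ ≠ 0) (hγ : γ ≠ 0) {B C : Set (List SOrd)}
    (hB : IsBasic δ γ τ S B) (hC : IsBasic δ γ τ S C) :
    B ⊆ C ∨ C ⊆ B ∨ Disjoint B C := by
  classical
  rcases hB with ⟨α, hα, rfl⟩ | ⟨x, hx, rfl⟩ | ⟨z, hz, rfl⟩
  · rcases hC with ⟨β, hβ, rfl⟩ | ⟨y, hy, rfl⟩ | ⟨w, hw, rfl⟩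
    · rcases le_total α β with h | h
      · exact Or.inl (Lbelow_mono h)
      · exact Or.inr (Or.inl (Lbelow_mono h))
    · obtain ⟨α₀, hα₀, hy0⟩ := hy.head
      rcases le_or_gt α₀ α with h | h
      · exact Or.inr (Or.inl (Jset_subset_Lbelow hy hy0 h))
      · exact Or.inr (Or.inr (Jset_disjoint_Lbelow hy hy0 h).symm)
    · by_cases h : w ∈ Lbelow δ γ α
      · exact Or.inr (Or.inl (by simpa using h))
      · exact Or.inr (Or.inr (by simpa using h))
  · rcases hC with ⟨β, hβ, rfl⟩ | ⟨y, hy, rfl⟩ | ⟨w, hw, rfl⟩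
    · obtain ⟨α₀, hα₀, hx0⟩ := hx.head
      rcases le_or_gt α₀ β with h | h
      · exact Or.inl (Jset_subset_Lbelow hx hx0 h)
      · exact Or.inr (Or.inr (Jset_disjoint_Lbelow hx hx0 h))
    · exact Jset_laminar hx hy
    · by_cases h : w ∈ Jset δ γ x
      · exact Or.inr (Or.inl (by simpa using h))
      · exact Or.inr (Or.inr (by simpa using h))
  · by_cases h : z ∈ C
    · exact Or.inl (by simpa using h)
    · exact Or.inr (Or.inr (by simpa using h))

/-- a finite cover by sets each admitting a minimum on its intersection with `G`
yields a minimum of `G`. -/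
theorem exists_min_of_cover (F : Finset (Set (List SOrd))) (G : Set (List SOrd))
    (hmin : ∀ P ∈ F, (G ∩ P).Nonempty → ∃ m ∈ G ∩ P, ∀ q ∈ G ∩ P, Lle m q)
    (hcov : G ⊆ ⋃ P ∈ F, P) (hne : G.Nonempty) :
    ∃ m ∈ G, ∀ q ∈ G, Lle m q := by
  classical
  suffices h : ∀ (H : Finset (Set (List SOrd))), H ⊆ F →
      (G ∩ ⋃ P ∈ H, P).Nonempty →
      ∃ m ∈ G ∩ ⋃ P ∈ H, P, ∀ q ∈ G ∩ ⋃ P ∈ H, P, Lle m q by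
    obtain ⟨z, hz⟩ := hne
    obtain ⟨m, hm, hmle⟩ := h F (le_refl F) ⟨z, hz, hcov hz⟩
    exact ⟨m, hm.1, fun q hq => hmle q ⟨hq, hcov hq⟩⟩
  intro H
  induction H using Finset.induction_on with
  | empty => intro _ h; simp at h
  | @insert P H hPH ih =>
    intro hsub hne'
    have hPF : P ∈ F := hsub (Finset.mem_insert_self P H)
    have hHF : H ⊆ F := fun Q hQ => hsub (Finset.mem_insert_of_mem hQ)
    have hsplit : (G ∩ ⋃ Q ∈ insert P H, Q) = (G ∩ P) ∪ (G ∩ ⋃ Q ∈ H, Q) := by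
      simp [Set.inter_union_distrib_left]
    rcases Set.eq_empty_or_nonempty (G ∩ ⋃ Q ∈ H, Q) with hH0 | hHne
    · have hGP : (G ∩ P).Nonempty := by
        rcases hne' with ⟨z, hz⟩
        rw [hsplit] at hz
        rcases hz with hz | hz
        · exact ⟨z, hz⟩
        · rw [hH0] at hz; simp at hz
      obtain ⟨m, hm, hmle⟩ := hmin P hPF hGP
      refine ⟨m, by rw [hsplit]; exact Or.inl hm, ?_⟩
      intro q hq
      rw [hsplit] at hq
      rcases hq with hq | hq
      · exact hmle q hq
      · rw [hH0] at hq; simp at hq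
    · obtain ⟨m1, hm1, hm1le⟩ := ih hHF hHne
      rcases Set.eq_empty_or_nonempty (G ∩ P) with hP0 | hPne
      · refine ⟨m1, by rw [hsplit]; exact Or.inr hm1, ?_⟩
        intro q hq
        rw [hsplit] at hq
        rcases hq with hq | hq
        · rw [hP0] at hq; simp at hq
        · exact hm1le q hq
      · obtain ⟨m2, hm2, hm2le⟩ := hmin P hPF hPne
        rcases lle_total m1 m2 with h12 | h21
        · refine ⟨m1, by rw [hsplit]; exact Or.inr hm1, ?_⟩
          intro q hq
          rw [hsplit] at hq
          rcases hq with hq | hq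
          · exact lle_trans h12 (hm2le q hq)
          · exact hm1le q hq
        · refine ⟨m2, by rw [hsplit]; exact Or.inl hm2, ?_⟩
          intro q hq
          rw [hsplit] at hq
          rcases hq with hq | hq
          · exact hm2le q hq
          · exact lle_trans h21 (hm1le q hq)

theorem cover_contradiction (F : Finset (Set (List SOrd))) (G : Set (List SOrd))
    (hmin : ∀ P ∈ F, (G ∩ P).Nonempty → ∃ m ∈ G ∩ P, ∀ q ∈ G ∩ P, Lle m q)
    (hcov : G ⊆ ⋃ P ∈ F, P) (hne : G.Nonempty)
    (hdec : ∀ g ∈ G, ∃ g' ∈ G, Llt g' g) : False := by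
  obtain ⟨m, hm, hmle⟩ := exists_min_of_cover F G hmin hcov hne
  obtain ⟨g', hg', hlt⟩ := hdec m hm
  exact not_llt_of_lle (hmle g' hg') hlt

end BasicSets


section Unsplit

variable {δ γ τ : Ordinal} {S : Ordinal → Set Ordinal}

theorem llt_last_lt {x y : List SOrd} {cx cy : SOrd} (hlen : y.length = x.length)
    (hpre : ∀ j : ℕ, j < x.length - 1 → y[j]? = x[j]?) (hxy : Llt y x)
    (hx1 : x[x.length - 1]? = some cx) (hy1 : y[x.length - 1]? = some cy) : cy < cx := by
  rw [llt_iff] at hxy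
  obtain ⟨k, pre, m⟩ := hxy
  rcases Nat.lt_trichotomy k (x.length - 1) with hk | hk | hk
  · rw [hpre k hk] at m
    exact absurd m (mlt_irrefl _)
  · subst hk
    rw [hx1, hy1] at m
    exact m
  · have hxlt : x.length - 1 < x.length := by
      by_contra h'
      push_neg at h'
      rw [List.getElem?_eq_none (by omega : x.length ≤ x.length - 1)] at hx1
      exact Option.some_ne_none _ hx1.symm
    have hxk : x[k]? = none := List.getElem?_eq_none (by omega)
    have hyk : y[k]? = none := List.getElem?_eq_none (by omega)
    rw [hxk, hyk] at m
    exact absurd m (mlt_irrefl _)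

theorem Jcase_final (hδ : δ ≠ 0) (hγ : γ ≠ 0) {x : List SOrd}
    (hx : Relevant δ γ τ S x) {F : Finset (Set (List SOrd))}
    (hbasic : ∀ P ∈ F, IsBasic δ γ τ S P)
    (hdisj : (↑F : Set (Set (List SOrd))).Pairwise Disjoint)
    (hsub : ∀ P ∈ F, P ⊆ Jset δ γ x)
    (hunion : Jset δ γ x ⊆ ⋃ P ∈ F, P)
    {pivot : List SOrd} (hpivset : pivot ∈ Lset δ γ)
    (hpiece : ({pivot} : Set (List SOrd)) ∈ F)
    (hpivlen : pivot.length ≤ x.length)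
    (hpivpref : ∀ j : ℕ, j < x.length - 1 → pivot[j]? = x[j]?)
    (hpivlast : ∀ c : SOrd, pivot[x.length - 1]? = some c → SOrd.IsPos c)
    (hGne : ∃ z, z ∈ Jset δ γ x ∧ Llt pivot z) : False := by
  classical
  set G : Set (List SOrd) := {z | z ∈ Jset δ γ x ∧ Llt pivot z} with hG
  have hn3 := hx.len3
  apply cover_contradiction F G ?_ ?_ ?_ ?_
  · -- minima
    intro P hP hPne
    rcases hbasic P hP with ⟨β, hβ, rfl⟩ | ⟨y₃, hy₃, rfl⟩ | ⟨w, hw, rfl⟩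
    · exact absurd (hsub _ hP) (Lbelow_not_subset_Jset hδ hγ hx β)
    · obtain ⟨z, hzG, hzP⟩ := hPne
      have ht₃P : y₃.take (y₃.length - 1) ∈ Jset δ γ y₃ := hy₃.take_mem_Jset
      have ht₃B : y₃.take (y₃.length - 1) ∈ Jset δ γ x := hsub _ hP ht₃P
      have hzy₃ : Llt z y₃ := (mem_Jset_iff.1 hzP).2.2
      have hpp : Llt pivot (y₃.take (y₃.length - 1)) := by
        by_contra hc
        have hc' := lle_of_not_llt hc
        have hpivP : pivot ∈ Jset δ γ y₃ :=
          mem_Jset_iff.2 ⟨hpivset, hc', llt_trans hzG.2 hzy₃⟩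
        have hne' : Jset δ γ y₃ ≠ ({pivot} : Set (List SOrd)) := by
          intro heq
          have : z ∈ ({pivot} : Set (List SOrd)) := heq ▸ hzP
          rw [Set.mem_singleton_iff] at this
          rw [this] at hzG
          exact llt_irrefl pivot hzG.2
        have hd := hdisj hP hpiece hne'
        exact Set.disjoint_left.1 hd hpivP rfl
      refine ⟨y₃.take (y₃.length - 1), ⟨⟨ht₃B, hpp⟩, ht₃P⟩, ?_⟩
      rintro q ⟨-, hqP⟩
      exact (mem_Jset_iff.1 hqP).2.1
    · obtain ⟨z, hzG, hzP⟩ := hPne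
      rw [Set.mem_singleton_iff] at hzP
      subst hzP
      exact ⟨z, ⟨hzG, rfl⟩, by rintro q ⟨-, hq⟩; rw [Set.mem_singleton_iff] at hq; exact Or.inr hq.symm⟩
  · -- cover
    intro z hz
    exact hunion hz.1
  · -- nonempty
    obtain ⟨z, hz1, hz2⟩ := hGne
    exact ⟨z, hz1, hz2⟩
  · -- decreasing
    rintro g ⟨hgJ, hgp⟩
    obtain ⟨hgL, htxg, hgx⟩ := mem_Jset_iff.1 hgJ
    have hg'L : g ++ [SOrd.neg 0] ∈ Lset δ γ := Lset.append hgL (isBetween_neg0 hδ)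
    have hg'g : Llt (g ++ [SOrd.neg 0]) g := llt_append_neg g 0
    have hpg' : Llt pivot (g ++ [SOrd.neg 0]) := by
      rcases llt_append_neg0_of_llt hgp with h | ⟨hlen2, heq2⟩
      · exact h
      · exfalso
        have hgn : pivot[g.length]? = some (SOrd.neg 0) := by
          rw [heq2 g.length (by omega), List.getElem?_append_right (le_refl g.length)]
          simp
        have hglen : g.length < pivot.length := by
          by_contra h'
          push_neg at h'
          rw [List.getElem?_eq_none h'] at hgn
          exact Option.some_ne_none _ hgn.symm
        rcases Nat.lt_or_ge g.length (x.length - 1) with hc | hc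
        · -- x extends g with a negative entry: x < g, contradiction
          have hxn : x[g.length]? = some (SOrd.neg 0) := by
            rw [← hpivpref g.length hc]; exact hgn
          have : Llt x g := by
            apply llt_of_prefix_neg (a := SOrd.neg 0) ?_ hxn (SOrd.not_isPos_neg 0)
            intro j hj
            rw [← hpivpref j (by omega), heq2 j (by omega),
              List.getElem?_append_left hj]
          exact llt_asymm hgx this
        · have : g.length = x.length - 1 := by omega
          rw [this] at hgn
          exact absurd (hpivlast _ hgn) (SOrd.not_isPos_neg 0)
    have hpivJ : pivot ∈ Jset δ γ x := hsub _ hpiece rfl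
    have htxpiv : Lle (x.take (x.length - 1)) pivot := (mem_Jset_iff.1 hpivJ).2.1
    exact ⟨g ++ [SOrd.neg 0], ⟨mem_Jset_iff.2 ⟨hg'L, lle_trans htxpiv (lle_of_llt hpg'),
      llt_trans hg'g hgx⟩, hpg'⟩, hg'g⟩

end Unsplit


section MasterUnsplit

variable {δ γ τ : Ordinal} {S : Ordinal → Set Ordinal}

theorem basic_unsplit (hδ : δ ≠ 0) (hγ : γ ≠ 0) {B : Set (List SOrd)}
    (hB : IsBasic δ γ τ S B) {F : Finset (Set (List SOrd))}
    (hbasic : ∀ P ∈ F, IsBasic δ γ τ S P)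
    (hdisj : (↑F : Set (Set (List SOrd))).Pairwise Disjoint)
    (hsub : ∀ P ∈ F, P ⊂ B)
    (hunion : B = ⋃ P ∈ F, P) : False := by
  classical
  have hmemU : ∀ z ∈ B, ∃ P ∈ F, z ∈ P := by
    intro z hz
    rw [hunion] at hz
    simpa using hz
  have hsub' : ∀ P ∈ F, P ⊆ B := fun P hP => (hsub P hP).subset
  rcases hB with ⟨α, hαγ, rfl⟩ | ⟨x, hx, rfl⟩ | ⟨z, hz, rfl⟩
  · -- B = Lbelow δ γ α
    set T : Set Ordinal := {β | β ≤ γ ∧ Lbelow δ γ β ∈ F} with hT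
    have hTfin : T.Finite := by
      apply Set.Finite.of_finite_image (f := fun β => Lbelow δ γ β)
      · apply F.finite_toSet.subset
        rintro _ ⟨β, hβ, rfl⟩
        exact hβ.2
      · intro β1 h1 β2 h2 heq
        exact Lbelow_inj h2.1 h1.1 heq
    by_cases hTne : T.Nonempty
    · obtain ⟨βs, hβsT, hβsmax⟩ := Set.Finite.exists_maximalFor id T hTfin hTne
      have hmax : ∀ β ∈ T, β ≤ βs := by
        intro β hβ
        by_contra hc
        push_neg at hc
        exact absurd (hβsmax hβ hc.le) (not_le.2 hc)
      have hβsγ : βs ≤ γ := hβsT.1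
      have hβsF : Lbelow δ γ βs ∈ F := hβsT.2
      have hβsα : βs < α := Lbelow_ssubset_lt hαγ hβsγ (hsub _ hβsF)
      have hβsγ' : βs < γ := lt_of_lt_of_le hβsα hαγ
      have hpB : [SOrd.pos βs] ∈ Lbelow δ γ α := single_mem_Lbelow_iff.2 ⟨hβsα, hβsγ'⟩
      obtain ⟨P₀, hP₀F, hpP₀⟩ := hmemU _ hpB
      have hP₀ : P₀ = ({[SOrd.pos βs]} : Set (List SOrd)) := by
        rcases hbasic P₀ hP₀F with ⟨β', hβ', rfl⟩ | ⟨y, hy, rfl⟩ | ⟨w, hw, rfl⟩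
        · have hβ'T : β' ∈ T := ⟨hβ', hP₀F⟩
          have hlt : βs < β' := (single_mem_Lbelow_iff.1 hpP₀).1
          exact absurd (hmax β' hβ'T) (not_le.2 hlt)
        · exact absurd hpP₀ (single_not_mem_Jset hy βs)
        · rw [Set.mem_singleton_iff] at hpP₀
          rw [hpP₀]
      rw [hP₀] at hP₀F
      set G : Set (List SOrd) := {z | z ∈ Lbelow δ γ α ∧ Llt [SOrd.pos βs] z} with hG
      apply cover_contradiction F G ?_ ?_ ?_ ?_
      · intro P hPF hPne
        rcases hbasic P hPF with ⟨β', hβ', rfl⟩ | ⟨y₃, hy₃, rfl⟩ | ⟨w, hw, rfl⟩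
        · exfalso
          obtain ⟨z, hzG, hzP⟩ := hPne
          have hβ'T : β' ∈ T := ⟨hβ', hPF⟩
          have h1 : Llt [SOrd.pos βs] [SOrd.pos β'] := llt_trans hzG.2 hzP.2
          exact absurd (hmax β' hβ'T) (not_le.2 (llt_single_single_iff.1 h1))
        · obtain ⟨z, hzG, hzP⟩ := hPne
          have ht₃P : y₃.take (y₃.length - 1) ∈ Jset δ γ y₃ := hy₃.take_mem_Jset
          have ht₃B : y₃.take (y₃.length - 1) ∈ Lbelow δ γ α := hsub' _ hPF ht₃P
          have hzy₃ : Llt z y₃ := (mem_Jset_iff.1 hzP).2.2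
          have hpp : Llt [SOrd.pos βs] (y₃.take (y₃.length - 1)) := by
            by_contra hc
            have hc' := lle_of_not_llt hc
            have hpP : [SOrd.pos βs] ∈ Jset δ γ y₃ :=
              mem_Jset_iff.2 ⟨Lset.single hβsγ', hc', llt_trans hzG.2 hzy₃⟩
            have hne' : Jset δ γ y₃ ≠ ({[SOrd.pos βs]} : Set (List SOrd)) := by
              intro heq
              have h6 := heq ▸ hzP
              rw [Set.mem_singleton_iff] at h6
              rw [h6] at hzG
              exact llt_irrefl _ hzG.2
            exact Set.disjoint_left.1 (hdisj hPF hP₀F hne') hpP rfl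
          refine ⟨y₃.take (y₃.length - 1), ⟨⟨ht₃B, hpp⟩, ht₃P⟩, ?_⟩
          rintro q ⟨-, hqP⟩
          exact (mem_Jset_iff.1 hqP).2.1
        · obtain ⟨z, hzG, hzP⟩ := hPne
          rw [Set.mem_singleton_iff] at hzP
          subst hzP
          exact ⟨z, ⟨hzG, rfl⟩, by
            rintro q ⟨-, hq⟩
            rw [Set.mem_singleton_iff] at hq
            exact Or.inr hq.symm⟩
      · intro z hz
        have h7 := hz.1
        rw [hunion] at h7
        exact h7
      · refine ⟨[SOrd.pos βs, SOrd.pos 0], ⟨?_, ?_⟩, ?_⟩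
        · have h8 : ([SOrd.pos βs] ++ [SOrd.pos 0]) ∈ Lset δ γ :=
            Lset.append (Lset.single hβsγ') (isBetween_pos0 hδ)
          simpa using h8
        · exact llt_of_head_lt rfl rfl (SOrd.pos_lt_pos_iff.2 hβsα)
        · apply llt_of_prefix_pos (a := SOrd.pos 0)
          · intro j hj
            have : j = 0 := by simpa using hj
            subst this; rfl
          · rfl
          · exact SOrd.isPos_pos 0
      · rintro g ⟨hgB, hgp⟩
        have hg' : g ++ [SOrd.neg 0] ∈ Lbelow δ γ α := Lbelow_append_neg0 hδ hgB
        have hpg' : Llt [SOrd.pos βs] (g ++ [SOrd.neg 0]) := by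
          rcases llt_append_neg0_of_llt hgp with h | ⟨hlen2, -⟩
          · exact h
          · exfalso
            have h9 := Lset.length_pos hgB.1
            simp only [List.length_cons, List.length_nil] at hlen2
            omega
        exact ⟨g ++ [SOrd.neg 0], ⟨hg', hpg'⟩, llt_append_neg g 0⟩
    · apply cover_contradiction F (Lbelow δ γ α) ?_ ?_ (Lbelow_nonempty hδ hγ α) ?_
      · intro P hPF hPne
        rcases hbasic P hPF with ⟨β', hβ', rfl⟩ | ⟨y₃, hy₃, rfl⟩ | ⟨w, hw, rfl⟩
        · exact absurd ⟨β', hβ', hPF⟩ hTne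
        · refine ⟨y₃.take (y₃.length - 1),
            ⟨hsub' _ hPF hy₃.take_mem_Jset, hy₃.take_mem_Jset⟩, ?_⟩
          rintro q ⟨-, hqP⟩
          exact (mem_Jset_iff.1 hqP).2.1
        · obtain ⟨z, hzG, hzP⟩ := hPne
          rw [Set.mem_singleton_iff] at hzP
          subst hzP
          exact ⟨z, ⟨hzG, rfl⟩, by
            rintro q ⟨-, hq⟩
            rw [Set.mem_singleton_iff] at hq
            exact Or.inr hq.symm⟩
      · intro z hz; rw [hunion] at hz; exact hz
      · intro g hg
        exact ⟨g ++ [SOrd.neg 0], Lbelow_append_neg0 hδ hg, llt_append_neg g 0⟩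
  · -- B = Jset x
    have hn3 := hx.len3
    have htxB : x.take (x.length - 1) ∈ Jset δ γ x := hx.take_mem_Jset
    obtain ⟨P₁, hP₁F, htxP₁⟩ := hmemU _ htxB
    rcases hbasic P₁ hP₁F with ⟨β, hβ, rfl⟩ | ⟨y, hy, rfl⟩ | ⟨w, hw, rfl⟩
    · exact absurd (hsub' _ hP₁F) (Lbelow_not_subset_Jset hδ hγ hx β)
    · have htb_mem : y.take (y.length - 1) ∈ Jset δ γ x := hsub' _ hP₁F hy.take_mem_Jset
      have h1 : Lle (x.take (x.length - 1)) (y.take (y.length - 1)) :=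
        (mem_Jset_iff.1 htb_mem).2.1
      have h2 : Lle (y.take (y.length - 1)) (x.take (x.length - 1)) :=
        (mem_Jset_iff.1 htxP₁).2.1
      have htbtx : y.take (y.length - 1) = x.take (x.length - 1) := lle_antisymm h2 h1
      have hm3 := hy.len3
      have hlen_eq : y.length = x.length := by
        have e1 := hy.take_length
        have e2 := hx.take_length
        have e3 := congrArg List.length htbtx
        rw [e1, e2] at e3
        omega
      have hyx : Llt y x := by
        rcases llt_trichotomy y x with h | h | h
        · exact h
        · exact absurd (by rw [h] : Jset δ γ y = Jset δ γ x) (hsub _ hP₁F).ne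
        · exfalso
          have hxP₁ : x ∈ Jset δ γ y :=
            mem_Jset_iff.2 ⟨hx.lset, htbtx ▸ lle_of_llt hx.take_llt, h⟩
          exact llt_irrefl x (mem_Jset_iff.1 (hsub' _ hP₁F hxP₁)).2.2
      have hyB : y ∈ Jset δ γ x :=
        mem_Jset_iff.2 ⟨hy.lset, htbtx ▸ lle_of_llt hy.take_llt, hyx⟩
      have hpivpref : ∀ j : ℕ, j < x.length - 1 → y[j]? = x[j]? := by
        intro j hj
        have hj' : j < y.length - 1 := by omega
        calc y[j]? = (y.take (y.length - 1))[j]? := (Relevant.take_getElem? hj').symm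
          _ = (x.take (x.length - 1))[j]? := by rw [htbtx]
          _ = x[j]? := Relevant.take_getElem? hj
      obtain ⟨P₂, hP₂F, hyP₂⟩ := hmemU _ hyB
      rcases hbasic P₂ hP₂F with ⟨β, hβ, rfl⟩ | ⟨y', hy', rfl⟩ | ⟨w, hw, rfl⟩
      · exact absurd (hsub' _ hP₂F) (Lbelow_not_subset_Jset hδ hγ hx β)
      · exfalso
        have htb'B : y'.take (y'.length - 1) ∈ Jset δ γ x := hsub' _ hP₂F hy'.take_mem_Jset
        have htb'P₂ : y'.take (y'.length - 1) ∈ Jset δ γ y' := hy'.take_mem_Jset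
        have hP₁P₂ : Jset δ γ y' ≠ Jset δ γ y := by
          intro heq
          have h5 : y ∈ Jset δ γ y := heq ▸ hyP₂
          exact llt_irrefl y (mem_Jset_iff.1 h5).2.2
        have htb'notP₁ : y'.take (y'.length - 1) ∉ Jset δ γ y :=
          Set.disjoint_left.1 (hdisj hP₂F hP₁F hP₁P₂) htb'P₂
        have h3 : Lle (y'.take (y'.length - 1)) y := (mem_Jset_iff.1 hyP₂).2.1
        have h4 : ¬ Llt (y'.take (y'.length - 1)) y := by
          intro hc
          apply htb'notP₁
          exact mem_Jset_iff.2 ⟨(mem_Jset_iff.1 htb'B).1,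
            htbtx.symm ▸ (mem_Jset_iff.1 htb'B).2.1, hc⟩
        have h5 : y'.take (y'.length - 1) = y := by
          rcases h3 with h | h
          · exact absurd h h4
          · exact h
        have e1 := hy'.take_length
        have e4 := congrArg List.length h5
        rw [e1] at e4
        have o1 := hy'.odd
        have o2 := hy.odd
        have l1 := hy'.len3
        omega
      · rw [Set.mem_singleton_iff] at hyP₂
        subst hyP₂
        obtain ⟨σ, hσ⟩ := hx.last_pos
        obtain ⟨σ', hσ'⟩ := hy.last_pos
        have hσ'' : y[x.length - 1]? = some (SOrd.pos σ') := by
          rw [← hlen_eq]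
          exact hσ'
        refine Jcase_final hδ hγ hx hbasic hdisj hsub' (le_of_eq hunion) hy.lset hP₂F
          hlen_eq.le hpivpref ?_ ?_
        · intro c hc
          rw [hσ''] at hc
          rw [← Option.some_inj.1 hc]
          exact SOrd.isPos_pos σ'
        · -- nonempty: y ++ [pos 0]
          have hz₀L : y ++ [SOrd.pos 0] ∈ Lset δ γ := Lset.append hy.lset (isBetween_pos0 hδ)
          have hyz₀ : Llt y (y ++ [SOrd.pos 0]) := llt_append_pos y [] 0
          have hσσ' : σ' < σ := by
            have := llt_last_lt hlen_eq hpivpref hyx hσ hσ''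
            exact SOrd.pos_lt_pos_iff.1 this
          have hz₀x : Llt (y ++ [SOrd.pos 0]) x := by
            apply llt_of_diff (x.length - 1)
            · intro j hj
              rw [List.getElem?_append_left (by omega), hpivpref j hj]
            · rw [List.getElem?_append_left (by omega : x.length - 1 < y.length), hσ'', hσ]
              exact SOrd.pos_lt_pos_iff.2 hσσ'
          refine ⟨y ++ [SOrd.pos 0], mem_Jset_iff.2 ⟨hz₀L, ?_, hz₀x⟩, hyz₀⟩
          exact lle_trans (mem_Jset_iff.1 hyB).2.1 (lle_of_llt hyz₀)
    · -- P₁ = {w}, w = tx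
      rw [Set.mem_singleton_iff] at htxP₁
      subst htxP₁
      refine Jcase_final hδ hγ hx hbasic hdisj hsub' (le_of_eq hunion) hx.take_lset hP₁F
        (by rw [hx.take_length]; omega) (fun j hj => Relevant.take_getElem? hj) ?_ ?_
      · intro c hc
        rw [List.getElem?_eq_none (by rw [hx.take_length] : (x.take (x.length - 1)).length ≤ x.length - 1)] at hc
        exact absurd hc.symm (Option.some_ne_none c)
      · obtain ⟨w', hw'J, hw'ne⟩ := Jset_nontrivial hδ hx
        refine ⟨w', hw'J, ?_⟩
        rcases (mem_Jset_iff.1 hw'J).2.1 with h | h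
        · exact h
        · exact absurd h.symm hw'ne
  · -- B = {z}
    obtain ⟨P, hPF, hzP⟩ := hmemU z rfl
    have h2 : P = ({z} : Set (List SOrd)) :=
      Set.Subset.antisymm (hsub' _ hPF) (Set.singleton_subset_iff.2 hzP)
    exact (hsub _ hPF).ne h2

end MasterUnsplit


section MainAux

variable {δ γ τ : Ordinal} {S : Ordinal → Set Ordinal}

theorem erase_biUnion {E : Finset (Set (List SOrd))}
    (hdisj : (↑E : Set (Set (List SOrd))).Pairwise Disjoint) {B : Set (List SOrd)}
    (hBE : B ∈ E) [DecidableEq (Set (List SOrd))] :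
    ⋃ P ∈ E.erase B, (P : Set (List SOrd)) = (⋃ P ∈ E, (P : Set (List SOrd))) \ B := by
  ext z
  simp only [Set.mem_iUnion, Set.mem_diff, Finset.mem_erase, exists_prop]
  constructor
  · rintro ⟨P, ⟨hPne, hPE⟩, hzP⟩
    refine ⟨⟨P, hPE, hzP⟩, ?_⟩
    intro hzB
    exact Set.disjoint_left.1 (hdisj hPE hBE hPne) hzP hzB
  · rintro ⟨⟨P, hPE, hzP⟩, hzB⟩
    refine ⟨P, ⟨?_, hPE⟩, hzP⟩
    intro h
    rw [h] at hzP
    exact hzB hzP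

theorem step_mem (hδ : δ ≠ 0) (hγ : γ ≠ 0) {E E' : Finset (Set (List SOrd))}
    (hbE : ∀ B ∈ E, IsBasic δ γ τ S B) (hbE' : ∀ B ∈ E', IsBasic δ γ τ S B)
    (hdE' : (↑E' : Set (Set (List SOrd))).Pairwise Disjoint)
    (huni : (⋃ B ∈ E, (B : Set (List SOrd))) = ⋃ B ∈ E', (B : Set (List SOrd)))
    {B : Set (List SOrd)} (hBE : B ∈ E)
    (hmax : ∀ C : Set (List SOrd), (C ∈ E ∨ C ∈ E') → B ⊆ C → B = C) :
    B ∈ E' := by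
  classical
  by_contra hBnot
  set F := E'.filter (fun C => (B ∩ C).Nonempty) with hF
  have hFsub : F ⊆ E' := Finset.filter_subset _ _
  have hFbasic : ∀ P ∈ F, IsBasic δ γ τ S P := fun P hP => hbE' P (hFsub hP)
  have hFdisj : (↑F : Set (Set (List SOrd))).Pairwise Disjoint :=
    hdE'.mono (by exact_mod_cast hFsub)
  have hFsub' : ∀ P ∈ F, P ⊂ B := by
    intro P hP
    obtain ⟨hPE', hPne⟩ := Finset.mem_filter.1 hP
    rcases basic_laminar hδ hγ (hbE _ hBE) (hbE' _ hPE') with h | h | h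
    · -- B ⊆ P : then B = P, so B ∈ E', contradiction
      exact absurd (hmax P (Or.inr hPE') h ▸ hPE') hBnot
    · refine ⟨h, ?_⟩
      intro hsub2
      have : B = P := Set.Subset.antisymm hsub2 h
      rw [this] at hBnot
      exact hBnot hPE'
    · exact absurd h hPne.not_disjoint
  have hFuni : B = ⋃ P ∈ F, (P : Set (List SOrd)) := by
    apply Set.Subset.antisymm
    · intro z hz
      have : z ∈ ⋃ C ∈ E', (C : Set (List SOrd)) := by
        rw [← huni]
        exact Set.mem_biUnion hBE hz
      simp only [Set.mem_iUnion, exists_prop] at this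
      obtain ⟨C, hCE', hzC⟩ := this
      have hCF : C ∈ F := Finset.mem_filter.2 ⟨hCE', ⟨z, hz, hzC⟩⟩
      exact Set.mem_biUnion hCF hzC
    · intro z hz
      simp only [Set.mem_iUnion, exists_prop] at hz
      obtain ⟨C, hCF, hzC⟩ := hz
      exact (hFsub' C hCF).subset hzC
  exact basic_unsplit hδ hγ (hbE _ hBE) hFbasic hFdisj hFsub' hFuni

end MainAux


/-- Every member of `I^{Σ,γ}` is a union of a finite family of pairwise disjoint
basic sets, and this family is unique: if `E` and `E'` are finite sets of pairwise
disjoint basic sets with `⋃E = ⋃E'`, then `E = E'`. -/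
theorem Ifam_unique_disjoint_decomposition (δ γ τ : Ordinal) (hδ : δ ≠ 0) (hγ : γ ≠ 0)
    (S : Ordinal → Set Ordinal) (hS : IsPartition δ τ S) :
    (∀ A ∈ Ifam δ γ τ S, ∃ E : Finset (Set (List SOrd)),
        (∀ B ∈ E, IsBasic δ γ τ S B) ∧
        (E : Set (Set (List SOrd))).Pairwise Disjoint ∧
        A = ⋃ B ∈ E, (B : Set (List SOrd))) ∧
    (∀ E E' : Finset (Set (List SOrd)),
        (∀ B ∈ E, IsBasic δ γ τ S B) → (E : Set (Set (List SOrd))).Pairwise Disjoint →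
        (∀ B ∈ E', IsBasic δ γ τ S B) → (E' : Set (Set (List SOrd))).Pairwise Disjoint →
        (⋃ B ∈ E, (B : Set (List SOrd))) = ⋃ B ∈ E', (B : Set (List SOrd)) →
        E = E') := by
  classical
  constructor
  · rintro A ⟨E, hbasic, rfl⟩
    refine ⟨E.filter (fun B => ∀ C ∈ E, ¬ B ⊂ C),
      fun B hB => hbasic B (Finset.mem_filter.1 hB).1, ?_, ?_⟩
    · intro B hB C hC hne
      rw [Finset.mem_coe] at hB hC
      obtain ⟨hBE, hBmax⟩ := Finset.mem_filter.1 hB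
      obtain ⟨hCE, hCmax⟩ := Finset.mem_filter.1 hC
      rcases basic_laminar hδ hγ (hbasic _ hBE) (hbasic _ hCE) with h | h | h
      · exact absurd (Set.ssubset_iff_subset_ne.2 ⟨h, hne⟩) (hBmax C hCE)
      · exact absurd (Set.ssubset_iff_subset_ne.2 ⟨h, hne.symm⟩) (hCmax B hBE)
      · exact h
    · apply Set.Subset.antisymm
      · intro z hz
        simp only [Set.mem_iUnion, exists_prop] at hz ⊢
        obtain ⟨B, hBE, hzB⟩ := hz
        have hsfin : {C : Set (List SOrd) | C ∈ E ∧ B ⊆ C}.Finite :=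
          E.finite_toSet.subset (fun C hC => hC.1)
        obtain ⟨C₀, hC₀s, hC₀max⟩ := Set.Finite.exists_maximalFor id
          {C : Set (List SOrd) | C ∈ E ∧ B ⊆ C} hsfin ⟨B, hBE, le_refl B⟩
        refine ⟨C₀, Finset.mem_filter.2 ⟨hC₀s.1, ?_⟩, hC₀s.2 hzB⟩
        intro D hDE hC₀D
        have hDs : D ∈ {C : Set (List SOrd) | C ∈ E ∧ B ⊆ C} :=
          ⟨hDE, hC₀s.2.trans hC₀D.subset⟩
        exact hC₀D.ne (Set.Subset.antisymm hC₀D.subset (hC₀max hDs hC₀D.subset))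
      · intro z hz
        simp only [Set.mem_iUnion, exists_prop] at hz ⊢
        obtain ⟨B, hB, hzB⟩ := hz
        exact ⟨B, (Finset.mem_filter.1 hB).1, hzB⟩
  · -- uniqueness
    have key : ∀ n : ℕ, ∀ E E' : Finset (Set (List SOrd)), E.card ≤ n →
        (∀ B ∈ E, IsBasic δ γ τ S B) → (↑E : Set (Set (List SOrd))).Pairwise Disjoint →
        (∀ B ∈ E', IsBasic δ γ τ S B) → (↑E' : Set (Set (List SOrd))).Pairwise Disjoint →
        ((⋃ B ∈ E, (B : Set (List SOrd))) = ⋃ B ∈ E', (B : Set (List SOrd))) → E = E' := by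
      intro n
      induction n with
      | zero =>
        intro E E' hcard hbE hdE hbE' hdE' huni
        have hE0 : E = ∅ := Finset.card_eq_zero.1 (le_antisymm hcard (Nat.zero_le _))
        subst hE0
        symm
        apply Finset.eq_empty_of_forall_notMem
        intro B' hB'
        obtain ⟨z, hz⟩ := IsBasic.nonempty hδ hγ (hbE' B' hB')
        have hz2 : z ∈ ⋃ B ∈ (∅ : Finset (Set (List SOrd))), (B : Set (List SOrd)) := by
          rw [huni]
          exact Set.mem_biUnion hB' hz
        simpa using hz2
      | succ n ih =>
        intro E E' hcard hbE hdE hbE' hdE' huni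
        rcases Finset.eq_empty_or_nonempty E with rfl | hEne
        · exact ih ∅ E' (by simp) hbE hdE hbE' hdE' huni
        · obtain ⟨B₀, hB₀⟩ := hEne
          have hne2 : ((↑(E ∪ E') : Set (Set (List SOrd)))).Nonempty :=
            ⟨B₀, by simp [hB₀]⟩
          obtain ⟨B, hBmem, hBmax⟩ := Set.Finite.exists_maximalFor id
            (↑(E ∪ E') : Set (Set (List SOrd))) (E ∪ E').finite_toSet hne2
          rw [Finset.mem_coe, Finset.mem_union] at hBmem
          have hmax' : ∀ C : Set (List SOrd), (C ∈ E ∨ C ∈ E') → B ⊆ C → B = C := by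
            intro C hC hsubC
            exact Set.Subset.antisymm hsubC (hBmax (by show C ∈ _; rw [Finset.mem_coe, Finset.mem_union]; exact hC) hsubC)
          have hBboth : B ∈ E ∧ B ∈ E' := by
            rcases hBmem with h | h
            · exact ⟨h, step_mem hδ hγ hbE hbE' hdE' huni h hmax'⟩
            · refine ⟨step_mem hδ hγ hbE' hbE hdE huni.symm h ?_, h⟩
              intro C hC hsubC
              exact hmax' C hC.symm hsubC
          obtain ⟨hBE, hBE'⟩ := hBboth
          have huni2 : (⋃ P ∈ E.erase B, (P : Set (List SOrd))) =
              ⋃ P ∈ E'.erase B, (P : Set (List SOrd)) := by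
            rw [erase_biUnion hdE hBE, erase_biUnion hdE' hBE', huni]
          have hcard2 : (E.erase B).card ≤ n := by
            have := Finset.card_erase_of_mem hBE
            have := Finset.card_pos.2 ⟨B, hBE⟩
            omega
          have hih := ih (E.erase B) (E'.erase B) hcard2
            (fun P hP => hbE P (Finset.mem_of_mem_erase hP))
            (hdE.mono (by exact_mod_cast Finset.erase_subset B E))
            (fun P hP => hbE' P (Finset.mem_of_mem_erase hP))
            (hdE'.mono (by exact_mod_cast Finset.erase_subset B E'))
            huni2
          have hins : insert B (E.erase B) = insert B (E'.erase B) := by rw [hih]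
          rwa [Finset.insert_erase hBE, Finset.insert_erase hBE'] at hins
    exact fun E E' hbE hdE hbE' hdE' huni =>
      key E.card E E' (le_refl _) hbE hdE hbE' hdE' huni
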